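/- Let E be an n-perfect pseudo-effect algebra in which each Eᵢ of its n-decomposition is both upwards and downwards directed, and suppose every decreasing chain in E₁ has a lower bound in E₁. Then there is a smallest element c ∈ E₁, nc = 1, each Eᵢ = {ic}, and E = {0, c, 2c, ..., nc}. -/
import Mathlib


/-- A pseudo-effect algebra (PEA): a structure with a partial addition `add`
(with domain of definition `D`), a zero and a one, satisfying (PE1)-(PE4)
together with the (derivable) neutrality of zero. -/
structure PEA (E : Type) where
  /-- `D a b` means that the partial sum `a + b` is defined. -/
  D : E → E → Prop
  /-- The partial addition (its value is relevant only when `D a b` holds). -/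
  add : E → E → E
  zero : E
  one : E
  /-- (PE1), definedness part. -/
  assoc_defined : ∀ a b c, (D a b ∧ D (add a b) c) ↔ (D b c ∧ D a (add b c))
  /-- (PE1), equality part. -/
  assoc_eq : ∀ a b c, D a b → D (add a b) c → add (add a b) c = add a (add b c)
  /-- (PE2), right complement. -/
  compl_right : ∀ a, ∃! d, D a d ∧ add a d = one
  /-- (PE2), left complement. -/
  compl_left : ∀ a, ∃! e, D e a ∧ add e a = one
  /-- (PE3). -/
  pe3 : ∀ a b, D a b →
    (∃ d, D d a ∧ add d a = add a b) ∧ (∃ e, D b e ∧ add b e = add a b)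
  /-- (PE4). -/
  pe4_right : ∀ a, D a one → a = zero
  pe4_left : ∀ a, D one a → a = zero
  D_zero_right : ∀ a, D a zero
  D_zero_left : ∀ a, D zero a
  add_zero : ∀ a, add a zero = a
  zero_add : ∀ a, add zero a = a

namespace PEA

variable {E : Type} (P : PEA E)

/-- The induced partial order: `a ≤ b` iff `a + c = b` for some `c`. -/
def le (a b : E) : Prop := ∃ c, P.D a c ∧ P.add a c = b

/-- The left complement `a⁻`, the unique element with `a⁻ + a = 1`. -/
noncomputable def lneg (a : E) : E := (P.compl_left a).choose

/-- The right complement `a~`, the unique element with `a + a~ = 1`. -/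
noncomputable def rneg (a : E) : E := (P.compl_right a).choose

/-- `E` is weakly commutative if `a + b` is defined iff `b + a` is defined. -/
def WeaklyCommutative : Prop := ∀ a b, P.D a b ↔ P.D b a

/-- `E` is symmetric if the two complements coincide. -/
def Symmetric : Prop := ∀ a, P.lneg a = P.rneg a

/-- A state on a PEA: a `[0,1]`-valued map, additive on existing sums, sending
`0 ↦ 0` and `1 ↦ 1`. -/
def IsState (s : E → ℝ) : Prop :=
  s P.zero = 0 ∧ s P.one = 1 ∧ (∀ a, 0 ≤ s a ∧ s a ≤ 1) ∧
    ∀ a b, P.D a b → s (P.add a b) = s a + s b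

/-- An `(n+1)`-valued discrete state: a state whose range is `{0, 1/n, …, 1}`. -/
def IsDiscreteState (n : ℕ) (s : E → ℝ) : Prop :=
  P.IsState s ∧ Set.range s = {x : ℝ | ∃ i ≤ n, x = (i : ℝ) / n}

/-- An ideal: a nonempty downward closed subset closed under existing sums. -/
def IsIdeal (I : Set E) : Prop :=
  I.Nonempty ∧ (∀ a i, i ∈ I → P.le a i → a ∈ I) ∧
    ∀ i j, i ∈ I → j ∈ I → P.D i j → P.add i j ∈ I

/-- A normal ideal: `a + i = j + a` implies `i ∈ I ↔ j ∈ I`. -/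
def IsNormalIdeal (I : Set E) : Prop :=
  P.IsIdeal I ∧ ∀ a i j, P.D a i → P.D j a → P.add a i = P.add j a → (i ∈ I ↔ j ∈ I)

/-- A maximal ideal: proper and not properly contained in a proper ideal. -/
def IsMaximalIdeal (I : Set E) : Prop :=
  P.IsIdeal I ∧ P.one ∉ I ∧ ∀ J, P.IsIdeal J → P.one ∉ J → I ⊆ J → I = J

/-- `n`-fold partial multiple of an element. -/
def nmul : ℕ → E → E
  | 0, _ => P.zero
  | k + 1, a => P.add (nmul k a) a

/-- Definedness of the `n`-fold partial multiple. -/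
def nmulD : ℕ → E → Prop
  | 0, _ => True
  | k + 1, a => nmulD k a ∧ P.D (P.nmul k a) a

/-- The set of elements of infinite isotropic index. -/
def Infinit : Set E := {a | ∀ k, P.nmulD k a}

/-- An `n`-decomposition of a PEA. -/
def IsNDecomp (n : ℕ) (F : ℕ → Set E) : Prop :=
  (∀ i, i ≤ n → (F i).Nonempty) ∧
  (∀ i j, i ≤ n → j ≤ n → i ≠ j → F i ∩ F j = ∅) ∧
  ((⋃ i ∈ Set.Iic n, F i) = Set.univ) ∧
  (∀ i, i ≤ n → P.lneg '' F i = F (n - i) ∧ P.rneg '' F i = F (n - i)) ∧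
  (∀ i j, i ≤ n → j ≤ n → ∀ x ∈ F i, ∀ y ∈ F j, P.D x y →
     i + j ≤ n ∧ P.add x y ∈ F (i + j))

/-- An `n`-perfect PEA: an `n`-decomposition with all sums `Eᵢ + Eⱼ`, `i+j < n`,
existing, and whose bottom slice is the unique maximal ideal. -/
def IsNPerfect (n : ℕ) (F : ℕ → Set E) : Prop :=
  P.IsNDecomp n F ∧
  (∀ i j, i + j < n → ∀ x ∈ F i, ∀ y ∈ F j, P.D x y) ∧
  (P.IsMaximalIdeal (F 0) ∧ ∀ J, P.IsMaximalIdeal J → J = F 0)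

end PEA

namespace PEA

variable {E : Type} (P : PEA E)

lemma rneg_spec' (a : E) : P.D a (P.rneg a) ∧ P.add a (P.rneg a) = P.one :=
  (P.compl_right a).choose_spec.1

lemma rneg_unique' {a d : E} (h1 : P.D a d) (h2 : P.add a d = P.one) : d = P.rneg a :=
  (P.compl_right a).choose_spec.2 d ⟨h1, h2⟩

lemma lneg_spec' (a : E) : P.D (P.lneg a) a ∧ P.add (P.lneg a) a = P.one :=
  (P.compl_left a).choose_spec.1

lemma lneg_unique' {a e : E} (h1 : P.D e a) (h2 : P.add e a = P.one) : e = P.lneg a :=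
  (P.compl_left a).choose_spec.2 e ⟨h1, h2⟩

lemma cancel_left' {a b c : E} (hab : P.D a b) (hac : P.D a c)
    (h : P.add a b = P.add a c) : b = c := by
  have hd1 : P.D (P.add a b) (P.rneg (P.add a b)) := (P.rneg_spec' _).1
  have hd2 : P.add (P.add a b) (P.rneg (P.add a b)) = P.one := (P.rneg_spec' _).2
  set d := P.rneg (P.add a b) with hdd
  have h1 := (P.assoc_defined a b d).1 ⟨hab, hd1⟩
  have e1 : P.add a (P.add b d) = P.one := by
    rw [← P.assoc_eq a b d hab hd1]; exact hd2
  have hbd : P.add b d = P.rneg a := P.rneg_unique' h1.2 e1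
  have hd1' : P.D (P.add a c) d := by rw [← h]; exact hd1
  have hd2' : P.add (P.add a c) d = P.one := by rw [← h]; exact hd2
  have h2 := (P.assoc_defined a c d).1 ⟨hac, hd1'⟩
  have e2 : P.add a (P.add c d) = P.one := by
    rw [← P.assoc_eq a c d hac hd1']; exact hd2'
  have hcd : P.add c d = P.rneg a := P.rneg_unique' h2.2 e2
  have hr1 : P.D (P.rneg a) (P.rneg (P.rneg a)) := (P.rneg_spec' _).1
  have hr2 : P.add (P.rneg a) (P.rneg (P.rneg a)) = P.one := (P.rneg_spec' _).2
  set e := P.rneg (P.rneg a) with hee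
  have hb1 : P.D (P.add b d) e := by rw [hbd]; exact hr1
  have hb2 : P.add (P.add b d) e = P.one := by rw [hbd]; exact hr2
  have h3 := (P.assoc_defined b d e).1 ⟨h1.1, hb1⟩
  have e3 : P.add b (P.add d e) = P.one := by
    rw [← P.assoc_eq b d e h1.1 hb1]; exact hb2
  have hde_b : P.add d e = P.rneg b := P.rneg_unique' h3.2 e3
  have hc1 : P.D (P.add c d) e := by rw [hcd]; exact hr1
  have hc2 : P.add (P.add c d) e = P.one := by rw [hcd]; exact hr2
  have h4 := (P.assoc_defined c d e).1 ⟨h2.1, hc1⟩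
  have e4 : P.add c (P.add d e) = P.one := by
    rw [← P.assoc_eq c d e h2.1 hc1]; exact hc2
  have hde_c : P.add d e = P.rneg c := P.rneg_unique' h4.2 e4
  have hbc : P.rneg b = P.rneg c := by rw [← hde_b, hde_c]
  have hbb : b = P.lneg (P.rneg b) := P.lneg_unique' (P.rneg_spec' b).1 (P.rneg_spec' b).2
  have hcc : c = P.lneg (P.rneg c) := P.lneg_unique' (P.rneg_spec' c).1 (P.rneg_spec' c).2
  rw [hbb, hcc, hbc]

lemma cancel_right' {a b c : E} (hba : P.D b a) (hca : P.D c a)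
    (h : P.add b a = P.add c a) : b = c := by
  have hd1 : P.D (P.lneg (P.add b a)) (P.add b a) := (P.lneg_spec' _).1
  have hd2 : P.add (P.lneg (P.add b a)) (P.add b a) = P.one := (P.lneg_spec' _).2
  set d := P.lneg (P.add b a) with hdd
  have h1 := (P.assoc_defined d b a).2 ⟨hba, hd1⟩
  have e1 : P.add (P.add d b) a = P.one := by
    rw [P.assoc_eq d b a h1.1 h1.2]; exact hd2
  have hdb : P.add d b = P.lneg a := P.lneg_unique' h1.2 e1
  have hd1' : P.D d (P.add c a) := by rw [← h]; exact hd1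
  have hd2' : P.add d (P.add c a) = P.one := by rw [← h]; exact hd2
  have h2 := (P.assoc_defined d c a).2 ⟨hca, hd1'⟩
  have e2 : P.add (P.add d c) a = P.one := by
    rw [P.assoc_eq d c a h2.1 h2.2]; exact hd2'
  have hdc : P.add d c = P.lneg a := P.lneg_unique' h2.2 e2
  have hl1 : P.D (P.lneg (P.lneg a)) (P.lneg a) := (P.lneg_spec' _).1
  have hl2 : P.add (P.lneg (P.lneg a)) (P.lneg a) = P.one := (P.lneg_spec' _).2
  set e := P.lneg (P.lneg a) with hee
  have hb1 : P.D e (P.add d b) := by rw [hdb]; exact hl1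
  have hb2 : P.add e (P.add d b) = P.one := by rw [hdb]; exact hl2
  have h3 := (P.assoc_defined e d b).2 ⟨h1.1, hb1⟩
  have e3 : P.add (P.add e d) b = P.one := by
    rw [P.assoc_eq e d b h3.1 h3.2]; exact hb2
  have hed_b : P.add e d = P.lneg b := P.lneg_unique' h3.2 e3
  have hc1 : P.D e (P.add d c) := by rw [hdc]; exact hl1
  have hc2 : P.add e (P.add d c) = P.one := by rw [hdc]; exact hl2
  have h4 := (P.assoc_defined e d c).2 ⟨h2.1, hc1⟩
  have e4 : P.add (P.add e d) c = P.one := by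
    rw [P.assoc_eq e d c h4.1 h4.2]; exact hc2
  have hed_c : P.add e d = P.lneg c := P.lneg_unique' h4.2 e4
  have hbc : P.lneg b = P.lneg c := by rw [← hed_b, hed_c]
  have hbb : b = P.rneg (P.lneg b) := P.rneg_unique' (P.lneg_spec' b).1 (P.lneg_spec' b).2
  have hcc : c = P.rneg (P.lneg c) := P.rneg_unique' (P.lneg_spec' c).1 (P.lneg_spec' c).2
  rw [hbb, hcc, hbc]

lemma le_refl' (a : E) : P.le a a := ⟨P.zero, P.D_zero_right a, P.add_zero a⟩

lemma le_trans' {a b c : E} (h1 : P.le a b) (h2 : P.le b c) : P.le a c := by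
  obtain ⟨u, hu, hab⟩ := h1
  obtain ⟨v, hv, hbc⟩ := h2
  subst hab
  have h := (P.assoc_defined a u v).1 ⟨hu, hv⟩
  exact ⟨P.add u v, h.2, by rw [← P.assoc_eq a u v hu hv]; exact hbc⟩

lemma eq_zero_of_add_eq_zero' {a b : E} (hab : P.D a b) (h : P.add a b = P.zero) :
    a = P.zero ∧ b = P.zero := by
  have h1 : P.D (P.add a b) P.one := by rw [h]; exact P.D_zero_left P.one
  have h2 := (P.assoc_defined a b P.one).1 ⟨hab, h1⟩
  have hb : b = P.zero := P.pe4_right b h2.1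
  have ha : a = P.zero := by rw [← h, hb, P.add_zero]
  exact ⟨ha, hb⟩

lemma le_antisymm' {a b : E} (h1 : P.le a b) (h2 : P.le b a) : a = b := by
  obtain ⟨u, hu, hab⟩ := h1
  obtain ⟨v, hv, hba⟩ := h2
  subst hab
  have h := (P.assoc_defined a u v).1 ⟨hu, hv⟩
  have heq : P.add a (P.add u v) = P.add a P.zero := by
    rw [← P.assoc_eq a u v hu hv, P.add_zero]; exact hba
  have huv := P.cancel_left' h.2 (P.D_zero_right a) heq
  have hz := P.eq_zero_of_add_eq_zero' h.1 huv
  rw [hz.1, P.add_zero]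

end PEA

/-- if in an `n`-perfect PEA every slice is up- and downwards
directed and every decreasing chain in `E₁` has a lower bound in `E₁`, then `E₁`
has a smallest element `c`, `nc = 1`, `Eᵢ = {ic}` and `E = {0, c, …, nc}`. -/
theorem stmt12 {E : Type} (P : PEA E) (n : ℕ) (hn : 1 ≤ n) (F : ℕ → Set E)
    (hF : P.IsNPerfect n F)
    (hdir : ∀ i ≤ n,
      (∀ x ∈ F i, ∀ y ∈ F i, ∃ z ∈ F i, P.le z x ∧ P.le z y) ∧
      (∀ x ∈ F i, ∀ y ∈ F i, ∃ z ∈ F i, P.le x z ∧ P.le y z))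
    (hchain : ∀ C ⊆ F 1, IsChain P.le C → ∃ c ∈ F 1, ∀ x ∈ C, P.le c x) :
    ∃ c ∈ F 1, (∀ x ∈ F 1, P.le c x) ∧ P.nmulD n c ∧ P.nmul n c = P.one ∧
      (∀ i ≤ n, F i = {P.nmul i c}) ∧
      (Set.univ : Set E) = {x : E | ∃ i ≤ n, x = P.nmul i c} := by
  obtain ⟨⟨hne, hdisj, hcov, hneg, hsum⟩, hex, hmax, _⟩ := hF
  -- basic class facts
  have classEq : ∀ i j x, i ≤ n → j ≤ n → x ∈ F i → x ∈ F j → i = j := by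
    intro i j x hi hj hxi hxj
    by_contra hij
    have h := hdisj i j hi hj hij
    exact absurd (Set.mem_inter hxi hxj) (by rw [h]; exact Set.notMem_empty x)
  have hcover : ∀ x : E, ∃ i ≤ n, x ∈ F i := by
    intro x
    have hx : x ∈ ⋃ i ∈ Set.Iic n, F i := by rw [hcov]; trivial
    simpa using hx
  have h0mem : P.zero ∈ F 0 := by
    obtain ⟨i0, hi0⟩ := hne 0 (Nat.zero_le n)
    exact hmax.1.2.1 P.zero i0 hi0 ⟨i0, P.D_zero_left i0, P.zero_add i0⟩
  have hr0 : P.rneg P.zero = P.one :=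
    (P.rneg_unique' (P.D_zero_left P.one) (P.zero_add P.one)).symm
  have h1mem : P.one ∈ F n := by
    have himg := (hneg 0 (Nat.zero_le n)).2
    rw [Nat.sub_zero] at himg
    rw [← himg]
    exact ⟨P.zero, h0mem, hr0⟩
  -- Zorn: a minimal element of F 1
  letI : Preorder E :=
    { le := fun a b => P.le b a
      le_refl := fun a => P.le_refl' a
      le_trans := fun a b c h1 h2 => P.le_trans' h2 h1 }
  obtain ⟨x0, hx0⟩ := hne 1 hn
  obtain ⟨c, _, hc, hcmin⟩ := zorn_le_nonempty₀ (F 1)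
    (fun C hC hchainC y hy => by
      obtain ⟨lb, hlb, hlb2⟩ := hchain C hC
        (fun x hx y' hy' hxy => (hchainC hx hy' hxy).symm)
      exact ⟨lb, hlb, fun z hz => hlb2 z hz⟩) x0 hx0
  -- c is the least element of F 1
  have hcleast : ∀ x ∈ F 1, P.le c x := by
    intro x hx
    obtain ⟨z, hz, hzx, hzc⟩ := (hdir 1 hn).1 x hx c hc
    exact P.le_trans' (hcmin hz hzc) hzx
  -- F 0 = {0}
  have hF0 : F 0 = {P.zero} := by
    apply Set.eq_singleton_iff_unique_mem.mpr
    refine ⟨h0mem, fun a ha => ?_⟩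
    have hlc : P.lneg c ∈ F (n - 1) := by
      rw [← (hneg 1 hn).1]; exact ⟨c, hc, rfl⟩
    have hDla : P.D (P.lneg c) a := hex (n - 1) 0 (by omega) _ hlc a ha
    have hs : P.add (P.lneg c) a ∈ F (n - 1) := by
      have h := (hsum (n - 1) 0 (by omega) (Nat.zero_le n) _ hlc a ha hDla).2
      rwa [Nat.add_zero] at h
    have hx1 : P.rneg (P.add (P.lneg c) a) ∈ F 1 := by
      have himg := (hneg (n - 1) (by omega)).2
      rw [show n - (n - 1) = 1 by omega] at himg
      rw [← himg]
      exact ⟨_, hs, rfl⟩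
    have hxs : P.D (P.add (P.lneg c) a) (P.rneg (P.add (P.lneg c) a)) := (P.rneg_spec' _).1
    have hxe : P.add (P.add (P.lneg c) a) (P.rneg (P.add (P.lneg c) a)) = P.one :=
      (P.rneg_spec' _).2
    have h5 := (P.assoc_defined (P.lneg c) a _).1 ⟨hDla, hxs⟩
    have e5 : P.add (P.lneg c) (P.add a (P.rneg (P.add (P.lneg c) a))) = P.one := by
      rw [← P.assoc_eq _ _ _ hDla hxs]; exact hxe
    have hax : P.add a (P.rneg (P.add (P.lneg c) a)) = P.rneg (P.lneg c) :=
      P.rneg_unique' h5.2 e5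
    have hrl : P.rneg (P.lneg c) = c :=
      (P.rneg_unique' (P.lneg_spec' c).1 (P.lneg_spec' c).2).symm
    rw [hrl] at hax
    obtain ⟨_, ⟨e, hde, hxe2⟩⟩ := P.pe3 a _ h5.1
    have hxlec : P.le (P.rneg (P.add (P.lneg c) a)) c := ⟨e, hde, by rw [hxe2, hax]⟩
    have hxc : P.rneg (P.add (P.lneg c) a) = c :=
      P.le_antisymm' hxlec (hcleast _ hx1)
    rw [hxc] at hax h5
    exact P.cancel_right' h5.1 (P.D_zero_left c) (by rw [P.zero_add]; exact hax)
  -- F 1 = {c}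
  have hF1 : F 1 = {c} := by
    apply Set.eq_singleton_iff_unique_mem.mpr
    refine ⟨hc, fun x hx => ?_⟩
    obtain ⟨d, hDcd, hcd⟩ := hcleast x hx
    obtain ⟨j, hj, hdj⟩ := hcover d
    have hsj := hsum 1 j hn hj c hc d hdj hDcd
    have hj0 : j = 0 := by
      have h := classEq 1 (1 + j) x hn hsj.1 hx (hcd ▸ hsj.2)
      omega
    subst hj0
    rw [hF0, Set.mem_singleton_iff] at hdj
    rw [← hcd, hdj, P.add_zero]
  -- the key induction
  have key : ∀ i, 1 ≤ i → i ≤ n → P.nmulD i c ∧ F i = {P.nmul i c} := by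
    intro i
    induction i with
    | zero => intro h _; exact absurd h (by omega)
    | succ k ih =>
      intro _ hkn
      by_cases hk : k = 0
      · subst hk
        have h1c : P.nmul 1 c = c := P.zero_add c
        refine ⟨⟨trivial, P.D_zero_left c⟩, ?_⟩
        rw [hF1, h1c]
      · have hk1 : 1 ≤ k := by omega
        have hkn' : k ≤ n := by omega
        obtain ⟨hDk, hFk⟩ := ih hk1 hkn'
        have hxeq : ∀ x ∈ F (k + 1), P.D (P.nmul k c) c ∧ P.nmul (k + 1) c = x := by
          intro x hx
          have hrx : P.rneg x ∈ F (n - (k + 1)) := by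
            rw [← (hneg (k + 1) hkn).2]
            exact ⟨x, hx, rfl⟩
          have hDcr : P.D c (P.rneg x) := hex 1 (n - (k + 1)) (by omega) c hc _ hrx
          have ht : P.add c (P.rneg x) ∈ F (n - k) := by
            have h := (hsum 1 (n - (k + 1)) hn (by omega) c hc _ hrx hDcr).2
            rwa [show 1 + (n - (k + 1)) = n - k by omega] at h
          have hlt : P.lneg (P.add c (P.rneg x)) ∈ F k := by
            have himg := (hneg (n - k) (by omega)).1
            rw [show n - (n - k) = k by omega] at himg
            rw [← himg]
            exact ⟨_, ht, rfl⟩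
          have hlEq : P.lneg (P.add c (P.rneg x)) = P.nmul k c := by
            rw [hFk, Set.mem_singleton_iff] at hlt; exact hlt
          have hDl : P.D (P.nmul k c) (P.add c (P.rneg x)) := by
            rw [← hlEq]; exact (P.lneg_spec' _).1
          have hEl : P.add (P.nmul k c) (P.add c (P.rneg x)) = P.one := by
            rw [← hlEq]; exact (P.lneg_spec' _).2
          have h6 := (P.assoc_defined (P.nmul k c) c (P.rneg x)).2 ⟨hDcr, hDl⟩
          have e6 : P.add (P.add (P.nmul k c) c) (P.rneg x) = P.one := by
            rw [P.assoc_eq _ _ _ h6.1 h6.2]; exact hEl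
          have h7 : P.add (P.nmul k c) c = P.lneg (P.rneg x) := P.lneg_unique' h6.2 e6
          have h8 : x = P.lneg (P.rneg x) :=
            P.lneg_unique' (P.rneg_spec' x).1 (P.rneg_spec' x).2
          exact ⟨h6.1, by show P.add (P.nmul k c) c = x; rw [h7, ← h8]⟩
        obtain ⟨y0, hy0⟩ := hne (k + 1) hkn
        refine ⟨⟨hDk, (hxeq y0 hy0).1⟩, ?_⟩
        apply Set.eq_singleton_iff_unique_mem.mpr
        exact ⟨by rw [(hxeq y0 hy0).2]; exact hy0, fun x hx => ((hxeq x hx).2).symm⟩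
  obtain ⟨hDn, hFn⟩ := key n hn le_rfl
  have hn1 : P.nmul n c = P.one := by
    rw [hFn, Set.mem_singleton_iff] at h1mem
    exact h1mem.symm
  refine ⟨c, hc, hcleast, hDn, hn1, ?_, ?_⟩
  · intro i hi
    rcases Nat.eq_zero_or_pos i with h0 | h1
    · subst h0
      rw [hF0]
      rfl
    · exact (key i h1 hi).2
  · apply Set.eq_of_subset_of_subset
    · intro x _
      obtain ⟨i, hi, hxi⟩ := hcover x
      rcases Nat.eq_zero_or_pos i with h0 | h1
      · subst h0
        rw [hF0, Set.mem_singleton_iff] at hxi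
        exact ⟨0, Nat.zero_le n, hxi⟩
      · rw [(key i h1 hi).2, Set.mem_singleton_iff] at hxi
        exact ⟨i, hi, hxi⟩
    · intro x _
      trivial
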